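/- Let $0<a<b$ and set $A=(a+b)/2$, $G=\sqrt{ab}$, $w_0(\tau)=\frac{2A\tau}{G^2+\tau^2}$. Then $\int_a^b \frac{1}{\sqrt{w_0(\tau)^2-1}}\,\frac{d\tau}{\tau}=\pi$. -/

import Mathlib

set_option maxHeartbeats 1000000

open Real MeasureTheory Set Filter Topology intervalIntegral

private lemma heq_aux (a b x : ℝ) (ha : 0 < a) (hab : a < b) (hx : x ∈ Set.Ioo a b) :
    1 / Real.sqrt ((2 * ((a + b) / 2) * x / (Real.sqrt (a * b) ^ 2 + x ^ 2)) ^ 2 - 1) / x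
      = (a * b + x ^ 2) / (x * Real.sqrt ((x ^ 2 - a ^ 2) * (b ^ 2 - x ^ 2))) := by
  obtain ⟨hax, hxb⟩ := hx
  have hb : 0 < b := ha.trans hab
  have hx0 : 0 < x := ha.trans hax
  have hc : 0 < a * b + x ^ 2 := by positivity
  have hp : 0 < x ^ 2 - a ^ 2 := by nlinarith
  have hq : 0 < b ^ 2 - x ^ 2 := by nlinarith
  have hP : 0 < (x ^ 2 - a ^ 2) * (b ^ 2 - x ^ 2) := mul_pos hp hq
  rw [Real.sq_sqrt (by positivity : (0:ℝ) ≤ a * b)]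
  have h2 : (2 * ((a + b) / 2) * x / (a * b + x ^ 2)) ^ 2 - 1
      = ((x ^ 2 - a ^ 2) * (b ^ 2 - x ^ 2)) / (a * b + x ^ 2) ^ 2 := by
    field_simp
    ring
  rw [h2, Real.sqrt_div hP.le, Real.sqrt_sq hc.le, one_div_div, div_div,
    mul_comm (Real.sqrt ((x ^ 2 - a ^ 2) * (b ^ 2 - x ^ 2))) x]

private lemma F_deriv (a b x : ℝ) (ha : 0 < a) (hab : a < b) (hx : x ∈ Set.Ioo a b) :
    HasDerivAt (fun y : ℝ =>
        (Real.arcsin ((2 * y ^ 2 - a ^ 2 - b ^ 2) / (b ^ 2 - a ^ 2))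
          - Real.arcsin ((2 * (a * b) ^ 2 / y ^ 2 - a ^ 2 - b ^ 2) / (b ^ 2 - a ^ 2))) / 2)
      ((a * b + x ^ 2) / (x * Real.sqrt ((x ^ 2 - a ^ 2) * (b ^ 2 - x ^ 2)))) x := by
  obtain ⟨hax, hxb⟩ := hx
  have hb : 0 < b := ha.trans hab
  have hx0 : 0 < x := ha.trans hax
  have hd : 0 < b ^ 2 - a ^ 2 := by nlinarith
  have hp : 0 < x ^ 2 - a ^ 2 := by nlinarith
  have hq : 0 < b ^ 2 - x ^ 2 := by nlinarith
  have hP : 0 < (x ^ 2 - a ^ 2) * (b ^ 2 - x ^ 2) := mul_pos hp hq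
  have hs : 0 < Real.sqrt ((x ^ 2 - a ^ 2) * (b ^ 2 - x ^ 2)) := Real.sqrt_pos.2 hP
  have hx2 : (0:ℝ) < x ^ 2 := by positivity
  -- derivative of inner function 1
  have h1i : HasDerivAt (fun y : ℝ => (2 * y ^ 2 - a ^ 2 - b ^ 2) / (b ^ 2 - a ^ 2))
      (4 * x / (b ^ 2 - a ^ 2)) x := by
    have h := ((((hasDerivAt_pow 2 x).const_mul (2:ℝ)).sub_const (a ^ 2)).sub_const
      (b ^ 2)).div_const (b ^ 2 - a ^ 2)
    refine h.congr_deriv ?_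
    ring
  -- bounds for inner 1
  have hu1l : (-1 : ℝ) < (2 * x ^ 2 - a ^ 2 - b ^ 2) / (b ^ 2 - a ^ 2) := by
    rw [lt_div_iff₀ hd]; nlinarith
  have hu1r : (2 * x ^ 2 - a ^ 2 - b ^ 2) / (b ^ 2 - a ^ 2) < 1 := by
    rw [div_lt_one hd]; nlinarith
  have A1 := (Real.hasDerivAt_arcsin hu1l.ne' hu1r.ne).comp x h1i
  -- derivative of inner function 2
  have hbase : HasDerivAt (fun y : ℝ => 2 * (a * b) ^ 2 / y ^ 2)
      (-(4 * (a * b) ^ 2 / x ^ 3)) x := by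
    have h := (hasDerivAt_const x (2 * (a * b) ^ 2)).div (hasDerivAt_pow 2 x) hx2.ne'
    refine h.congr_deriv ?_
    field_simp
    ring
  have h2i : HasDerivAt (fun y : ℝ => (2 * (a * b) ^ 2 / y ^ 2 - a ^ 2 - b ^ 2) / (b ^ 2 - a ^ 2))
      (-(4 * (a * b) ^ 2 / x ^ 3) / (b ^ 2 - a ^ 2)) x :=
    ((hbase.sub_const (a ^ 2)).sub_const (b ^ 2)).div_const _
  have hrew : 2 * (a * b) ^ 2 / x ^ 2 - a ^ 2 - b ^ 2
      = (2 * a ^ 2 * b ^ 2 - (a ^ 2 + b ^ 2) * x ^ 2) / x ^ 2 := by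
    field_simp; ring
  have hu2l : (-1 : ℝ) < (2 * (a * b) ^ 2 / x ^ 2 - a ^ 2 - b ^ 2) / (b ^ 2 - a ^ 2) := by
    rw [lt_div_iff₀ hd, hrew, lt_div_iff₀ hx2]
    nlinarith [mul_pos (pow_pos ha 2) hq]
  have hu2r : (2 * (a * b) ^ 2 / x ^ 2 - a ^ 2 - b ^ 2) / (b ^ 2 - a ^ 2) < 1 := by
    rw [div_lt_one hd, hrew, div_lt_iff₀ hx2]
    nlinarith [mul_pos (pow_pos hb 2) hp]
  have A2 := (Real.hasDerivAt_arcsin hu2l.ne' hu2r.ne).comp x h2i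
  -- sqrt simplifications
  have s1 : Real.sqrt (1 - ((2 * x ^ 2 - a ^ 2 - b ^ 2) / (b ^ 2 - a ^ 2)) ^ 2)
      = 2 / (b ^ 2 - a ^ 2) * Real.sqrt ((x ^ 2 - a ^ 2) * (b ^ 2 - x ^ 2)) := by
    rw [show 1 - ((2 * x ^ 2 - a ^ 2 - b ^ 2) / (b ^ 2 - a ^ 2)) ^ 2
        = (2 / (b ^ 2 - a ^ 2)) ^ 2 * ((x ^ 2 - a ^ 2) * (b ^ 2 - x ^ 2)) from by
      field_simp; ring]
    rw [Real.sqrt_mul (sq_nonneg _), Real.sqrt_sq (by positivity)]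
  have s2 : Real.sqrt (1 - ((2 * (a * b) ^ 2 / x ^ 2 - a ^ 2 - b ^ 2) / (b ^ 2 - a ^ 2)) ^ 2)
      = 2 * a * b / (x ^ 2 * (b ^ 2 - a ^ 2)) * Real.sqrt ((x ^ 2 - a ^ 2) * (b ^ 2 - x ^ 2)) := by
    rw [show 1 - ((2 * (a * b) ^ 2 / x ^ 2 - a ^ 2 - b ^ 2) / (b ^ 2 - a ^ 2)) ^ 2
        = (2 * a * b / (x ^ 2 * (b ^ 2 - a ^ 2))) ^ 2 * ((x ^ 2 - a ^ 2) * (b ^ 2 - x ^ 2)) from by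
      field_simp; ring]
    rw [Real.sqrt_mul (sq_nonneg _), Real.sqrt_sq (by positivity)]
  have AF := (A1.sub A2).div_const 2
  have hval : (1 / Real.sqrt (1 - ((2 * x ^ 2 - a ^ 2 - b ^ 2) / (b ^ 2 - a ^ 2)) ^ 2)
        * (4 * x / (b ^ 2 - a ^ 2))
      - 1 / Real.sqrt (1 - ((2 * (a * b) ^ 2 / x ^ 2 - a ^ 2 - b ^ 2) / (b ^ 2 - a ^ 2)) ^ 2)
        * (-(4 * (a * b) ^ 2 / x ^ 3) / (b ^ 2 - a ^ 2))) / 2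
      = (a * b + x ^ 2) / (x * Real.sqrt ((x ^ 2 - a ^ 2) * (b ^ 2 - x ^ 2))) := by
    rw [s1, s2]
    field_simp
    ring
  rw [← hval]
  exact AF

private lemma integrable_aux (a b : ℝ) (ha : 0 < a) (hab : a < b) :
    IntervalIntegrable (fun τ : ℝ =>
        1 / Real.sqrt ((2 * ((a + b) / 2) * τ / (Real.sqrt (a * b) ^ 2 + τ ^ 2)) ^ 2 - 1) / τ)
      MeasureTheory.volume a b := by
  have hb : 0 < b := ha.trans hab
  set f : ℝ → ℝ := fun τ =>
    1 / Real.sqrt ((2 * ((a + b) / 2) * τ / (Real.sqrt (a * b) ^ 2 + τ ^ 2)) ^ 2 - 1) / τ with hf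
  have hm : Measurable f := by
    simp only [hf]
    exact (measurable_const.div ((Real.continuous_sqrt.measurable).comp
      ((((measurable_const.mul measurable_id).div
        (measurable_const.add (measurable_id.pow_const 2))).pow_const 2).sub
        measurable_const))).div measurable_id
  set C : ℝ := 2 * b ^ 2 / (a * Real.sqrt (a * b * (b - a))) with hC
  have hT : 0 < Real.sqrt (a * b * (b - a)) :=
    Real.sqrt_pos.2 (mul_pos (mul_pos ha hb) (by linarith))
  obtain ⟨m, hmdef⟩ : ∃ m : ℝ, m = (a + b) / 2 := ⟨_, rfl⟩
  have ham : a < m := by rw [hmdef]; linarith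
  have hmb : m < b := by rw [hmdef]; linarith
  have hbound : ∀ x ∈ Set.Ioo a b, ∀ t : ℝ,
      Real.sqrt (a * b * (b - a)) * Real.sqrt t ≤ Real.sqrt ((x ^ 2 - a ^ 2) * (b ^ 2 - x ^ 2)) →
      0 < t → f x ≤ C * (Real.sqrt t)⁻¹ := by
    intro x hx t hkey ht
    obtain ⟨hax, hxb⟩ := hx
    have hx0 : 0 < x := ha.trans hax
    have hp : 0 < x ^ 2 - a ^ 2 := by nlinarith
    have hq : 0 < b ^ 2 - x ^ 2 := by nlinarith
    have hs : 0 < Real.sqrt ((x ^ 2 - a ^ 2) * (b ^ 2 - x ^ 2)) :=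
      Real.sqrt_pos.2 (mul_pos hp hq)
    have hst : 0 < Real.sqrt t := Real.sqrt_pos.2 ht
    simp only [hf]
    rw [heq_aux a b x ha hab ⟨hax, hxb⟩, ← div_eq_mul_inv,
      div_le_div_iff₀ (mul_pos hx0 hs) hst, hC, div_mul_eq_mul_div,
      le_div_iff₀ (mul_pos ha hT)]
    have hnum : (a * b + x ^ 2) * a ≤ 2 * b ^ 2 * x := by
      have n1 : a ^ 2 * b ≤ b ^ 2 * x := by
        nlinarith [mul_lt_mul_of_pos_left hax ha, mul_lt_mul_of_pos_right hab hx0]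
      have n2 : a * x ^ 2 ≤ b ^ 2 * x := by
        nlinarith [mul_lt_mul_of_pos_right hab hx0, mul_lt_mul_of_pos_left hxb hb]
      nlinarith
    nlinarith [mul_le_mul hnum hkey (by positivity) (mul_nonneg (by positivity) hx0.le),
      Real.sqrt_nonneg t, Real.sqrt_nonneg (a * b * (b - a)), hs.le, hst.le]
  have hfb : f b = 0 := by
    simp only [hf]
    rw [Real.sq_sqrt (by positivity : (0:ℝ) ≤ a * b)]
    rw [show 2 * ((a + b) / 2) * b / (a * b + b ^ 2) = 1 from by
      rw [div_eq_one_iff_eq (by positivity : a * b + b ^ 2 ≠ 0)]; ring]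
    norm_num
  have hfpos : ∀ x ∈ Set.Ioo a b, 0 ≤ f x := by
    intro x hx
    simp only [hf]
    obtain ⟨hax, hxb⟩ := hx
    have hx0 : 0 < x := ha.trans hax
    positivity
  have i1 : IntervalIntegrable (fun x : ℝ => C * (x - a) ^ (-(1/2) : ℝ)) volume a m := by
    have h0 : IntervalIntegrable (fun x : ℝ => x ^ (-(1/2) : ℝ)) volume 0 (m - a) :=
      intervalIntegral.intervalIntegrable_rpow' (by norm_num)
    have h1 := (h0.comp_sub_right a).const_mul C
    simpa using h1
  have p1 : IntervalIntegrable f volume a m := by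
    apply i1.mono_fun' (hm.aestronglyMeasurable.restrict)
    rw [Set.uIoc_of_le ham.le]
    filter_upwards [ae_restrict_mem measurableSet_Ioc] with x hx
    obtain ⟨hax, hxm⟩ := hx
    have hxb : x < b := lt_of_le_of_lt hxm hmb
    have hxa0 : 0 < x - a := by linarith
    rw [Real.norm_eq_abs, abs_of_nonneg (hfpos x ⟨hax, hxb⟩),
      Real.rpow_neg hxa0.le, ← Real.sqrt_eq_rpow]
    apply hbound x ⟨hax, hxb⟩ (x - a) _ hxa0
    rw [← Real.sqrt_mul (mul_nonneg (mul_nonneg ha.le hb.le) (by linarith))]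
    apply Real.sqrt_le_sqrt
    have e1 : 2 * a ≤ x + a := by linarith
    have e2 : (b - a) / 2 ≤ b - x := by rw [hmdef] at hxm; linarith
    have e3 : b ≤ b + x := by linarith
    have h4 : 2 * a * ((b - a) / 2) ≤ (x + a) * (b - x) :=
      mul_le_mul e1 e2 (by linarith) (by linarith)
    have h5 : 2 * a * ((b - a) / 2) * b ≤ (x + a) * (b - x) * (b + x) :=
      mul_le_mul h4 e3 hb.le (by nlinarith)
    nlinarith [mul_le_mul_of_nonneg_left h5 hxa0.le]
  have i2 : IntervalIntegrable (fun x : ℝ => C * (b - x) ^ (-(1/2) : ℝ)) volume m b := by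
    have h0 : IntervalIntegrable (fun x : ℝ => x ^ (-(1/2) : ℝ)) volume (b - m) 0 :=
      intervalIntegral.intervalIntegrable_rpow' (by norm_num)
    have h1 := (h0.comp_sub_left b).const_mul C
    simpa using h1
  have p2 : IntervalIntegrable f volume m b := by
    apply i2.mono_fun' (hm.aestronglyMeasurable.restrict)
    rw [Set.uIoc_of_le hmb.le]
    filter_upwards [ae_restrict_mem measurableSet_Ioc] with x hx
    obtain ⟨hmx, hxb⟩ := hx
    rcases eq_or_lt_of_le hxb with rfl | hxb'
    · rw [hfb, sub_self, Real.zero_rpow (by norm_num), mul_zero, norm_zero]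
    · have hax : a < x := lt_trans ham hmx
      have hbx0 : 0 < b - x := by linarith
      rw [Real.norm_eq_abs, abs_of_nonneg (hfpos x ⟨hax, hxb'⟩),
        Real.rpow_neg hbx0.le, ← Real.sqrt_eq_rpow]
      apply hbound x ⟨hax, hxb'⟩ (b - x) _ hbx0
      rw [← Real.sqrt_mul (mul_nonneg (mul_nonneg ha.le hb.le) (by linarith))]
      apply Real.sqrt_le_sqrt
      have e1 : (b - a) / 2 ≤ x - a := by rw [hmdef] at hmx; linarith
      have e2 : 2 * a ≤ x + a := by linarith
      have e3 : b ≤ b + x := by linarith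
      have h4 : (b - a) / 2 * (2 * a) ≤ (x - a) * (x + a) :=
        mul_le_mul e1 e2 (by linarith) (by linarith)
      have h5 : (b - a) / 2 * (2 * a) * b ≤ (x - a) * (x + a) * (b + x) :=
        mul_le_mul h4 e3 hb.le (by nlinarith)
      nlinarith [mul_le_mul_of_nonneg_left h5 hbx0.le]
  exact p1.trans p2

theorem angle_integral_pi (a b : ℝ) (ha : 0 < a) (hab : a < b) :
    ∫ τ in a..b,
        1 / Real.sqrt ((2 * ((a + b) / 2) * τ / (Real.sqrt (a * b) ^ 2 + τ ^ 2)) ^ 2 - 1) / τ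
      = Real.pi := by
  have hb : 0 < b := ha.trans hab
  have hd : 0 < b ^ 2 - a ^ 2 := by nlinarith
  have hderiv : ∀ x ∈ Set.Ioo a b, HasDerivAt (fun y : ℝ =>
      (Real.arcsin ((2 * y ^ 2 - a ^ 2 - b ^ 2) / (b ^ 2 - a ^ 2))
        - Real.arcsin ((2 * (a * b) ^ 2 / y ^ 2 - a ^ 2 - b ^ 2) / (b ^ 2 - a ^ 2))) / 2)
      (1 / Real.sqrt ((2 * ((a + b) / 2) * x / (Real.sqrt (a * b) ^ 2 + x ^ 2)) ^ 2 - 1) / x)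
      x := by
    intro x hx
    rw [heq_aux a b x ha hab hx]
    exact F_deriv a b x ha hab hx
  have hint := integrable_aux a b ha hab
  have hFa : ContinuousAt (fun y : ℝ =>
      (Real.arcsin ((2 * y ^ 2 - a ^ 2 - b ^ 2) / (b ^ 2 - a ^ 2))
        - Real.arcsin ((2 * (a * b) ^ 2 / y ^ 2 - a ^ 2 - b ^ 2) / (b ^ 2 - a ^ 2))) / 2) a := by
    apply ContinuousAt.div_const
    apply ContinuousAt.sub
    · exact Real.continuous_arcsin.continuousAt.comp (ContinuousAt.div_const (by fun_prop) _)
    · apply Real.continuous_arcsin.continuousAt.comp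
      apply ContinuousAt.div_const
      apply ContinuousAt.sub _ continuousAt_const
      apply ContinuousAt.sub _ continuousAt_const
      exact ContinuousAt.div continuousAt_const (by fun_prop) (by positivity)
  have hFb : ContinuousAt (fun y : ℝ =>
      (Real.arcsin ((2 * y ^ 2 - a ^ 2 - b ^ 2) / (b ^ 2 - a ^ 2))
        - Real.arcsin ((2 * (a * b) ^ 2 / y ^ 2 - a ^ 2 - b ^ 2) / (b ^ 2 - a ^ 2))) / 2) b := by
    apply ContinuousAt.div_const
    apply ContinuousAt.sub
    · exact Real.continuous_arcsin.continuousAt.comp (ContinuousAt.div_const (by fun_prop) _)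
    · apply Real.continuous_arcsin.continuousAt.comp
      apply ContinuousAt.div_const
      apply ContinuousAt.sub _ continuousAt_const
      apply ContinuousAt.sub _ continuousAt_const
      exact ContinuousAt.div continuousAt_const (by fun_prop) (by positivity)
  have hta : Tendsto (fun y : ℝ =>
      (Real.arcsin ((2 * y ^ 2 - a ^ 2 - b ^ 2) / (b ^ 2 - a ^ 2))
        - Real.arcsin ((2 * (a * b) ^ 2 / y ^ 2 - a ^ 2 - b ^ 2) / (b ^ 2 - a ^ 2))) / 2)
      (𝓝[>] a) (𝓝 (-(Real.pi / 2))) := by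
    have hval : (Real.arcsin ((2 * a ^ 2 - a ^ 2 - b ^ 2) / (b ^ 2 - a ^ 2))
        - Real.arcsin ((2 * (a * b) ^ 2 / a ^ 2 - a ^ 2 - b ^ 2) / (b ^ 2 - a ^ 2))) / 2
        = -(Real.pi / 2) := by
      rw [show (2 * a ^ 2 - a ^ 2 - b ^ 2) / (b ^ 2 - a ^ 2) = -1 from by
        rw [div_eq_iff hd.ne']; ring]
      rw [show (2 * (a * b) ^ 2 / a ^ 2 - a ^ 2 - b ^ 2) / (b ^ 2 - a ^ 2) = 1 from by
        rw [div_eq_one_iff_eq hd.ne']; field_simp; ring]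
      rw [Real.arcsin_neg_one, Real.arcsin_one]
      ring
    rw [← hval]
    exact hFa.continuousWithinAt.tendsto
  have htb : Tendsto (fun y : ℝ =>
      (Real.arcsin ((2 * y ^ 2 - a ^ 2 - b ^ 2) / (b ^ 2 - a ^ 2))
        - Real.arcsin ((2 * (a * b) ^ 2 / y ^ 2 - a ^ 2 - b ^ 2) / (b ^ 2 - a ^ 2))) / 2)
      (𝓝[<] b) (𝓝 (Real.pi / 2)) := by
    have hval : (Real.arcsin ((2 * b ^ 2 - a ^ 2 - b ^ 2) / (b ^ 2 - a ^ 2))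
        - Real.arcsin ((2 * (a * b) ^ 2 / b ^ 2 - a ^ 2 - b ^ 2) / (b ^ 2 - a ^ 2))) / 2
        = Real.pi / 2 := by
      rw [show (2 * b ^ 2 - a ^ 2 - b ^ 2) / (b ^ 2 - a ^ 2) = 1 from by
        rw [div_eq_one_iff_eq hd.ne']; ring]
      rw [show (2 * (a * b) ^ 2 / b ^ 2 - a ^ 2 - b ^ 2) / (b ^ 2 - a ^ 2) = -1 from by
        rw [div_eq_iff hd.ne']; field_simp; ring]
      rw [Real.arcsin_neg_one, Real.arcsin_one]
      ring
    rw [← hval]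
    exact hFb.continuousWithinAt.tendsto
  rw [intervalIntegral.integral_eq_sub_of_hasDerivAt_of_tendsto hab hderiv hint hta htb]
  ring
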